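/- Let p be a prime, q a power of p, and H ≅ F_q (as additive group). Then the rational group algebra ℚ[H] is isomorphic to ℚ ⊕ (⊕_{a∈S} ℚ(ζ_p)) where S is a set of coset representatives of F_p* in F_q*; in particular dim_ℚ ℚ[H] = 1 + (q−1)/(p−1) · (p−1) = q and the number of ℚ-simple factors is 1 + (q−1)/(p−1). -/

import Mathlib

open Polynomial

namespace PW

noncomputable section

variable {R S : Type} [CommRing R] [CommRing S]

theorem liftNCRingHom_single {k R G : Type} [Semiring k] [AddMonoid G] [Semiring R]
    (f : k →+* R) (g : Multiplicative G →* R) (hc : ∀ x y, Commute (f x) (g y)) (a : G) (b : k) :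
    AddMonoidAlgebra.liftNCRingHom f g hc (AddMonoidAlgebra.single a b)
      = f b * g (Multiplicative.ofAdd a) :=
  AddMonoidAlgebra.liftNC_single _ _ _ _

/-- coefficient ring map on add monoid algebras -/
def mapRangeRingHom (G : Type) [AddCommMonoid G] (c : R →+* S) :
    AddMonoidAlgebra R G →+* AddMonoidAlgebra S G :=
  AddMonoidAlgebra.liftNCRingHom ((AddMonoidAlgebra.singleZeroRingHom).comp c)
    (AddMonoidAlgebra.of S G) fun _ _ => Commute.all _ _

theorem mapRangeRingHom_single (G : Type) [AddCommMonoid G] (c : R →+* S) (a : G) (b : R) :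
    mapRangeRingHom G c (AddMonoidAlgebra.single a b) = AddMonoidAlgebra.single a (c b) := by
  rw [mapRangeRingHom, liftNCRingHom_single]
  show AddMonoidAlgebra.single 0 (c b) * AddMonoidAlgebra.single a 1 = _
  rw [AddMonoidAlgebra.single_mul_single, zero_add, mul_one]

theorem mapRangeRingHom_apply (G : Type) [AddCommMonoid G] (c : R →+* S)
    (f : AddMonoidAlgebra R G) :
    (mapRangeRingHom G c f).coeff = Finsupp.mapRange c c.map_zero f.coeff := by
  induction f using AddMonoidAlgebra.induction_linear with
  | zero => simp [map_zero]
  | add f g hf hg =>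
      rw [map_add, AddMonoidAlgebra.coeff_add, hf, hg, AddMonoidAlgebra.coeff_add]
      ext x
      rw [Finsupp.add_apply, Finsupp.mapRange_apply, Finsupp.mapRange_apply, Finsupp.mapRange_apply, Finsupp.add_apply, map_add]
  | single a b =>
      rw [mapRangeRingHom_single]
      ext x
      simp [Finsupp.mapRange_apply, Finsupp.single_apply, apply_ite c]


/-- congruence in the coefficient ring -/
def mapRangeRingEquiv (G : Type) [AddCommMonoid G] (e : R ≃+* S) :
    AddMonoidAlgebra R G ≃+* AddMonoidAlgebra S G := by
  refine RingEquiv.ofRingHom (mapRangeRingHom G (e : R →+* S))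
    (mapRangeRingHom G (e.symm : S →+* R)) ?_ ?_ <;>
  · apply AddMonoidAlgebra.ringHom_ext <;> intro b <;>
      simp [mapRangeRingHom_single]

/-- finsupp into a product -/
def finsuppProd (G : Type) [AddCommMonoid G] : (G →₀ R × S) ≃ (G →₀ R) × (G →₀ S) where
  toFun f := (Finsupp.mapRange Prod.fst rfl f, Finsupp.mapRange Prod.snd rfl f)
  invFun x := Finsupp.zipWith Prod.mk rfl x.1 x.2
  left_inv f := Finsupp.ext fun a => by simp [Finsupp.mapRange_apply]
  right_inv x := Prod.ext (Finsupp.ext fun a => by simp [Finsupp.mapRange_apply])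
    (Finsupp.ext fun a => by simp [Finsupp.mapRange_apply])

/-- add monoid algebra over a product ring splits -/
def prodRingEquiv (G : Type) [AddCommMonoid G] :
    AddMonoidAlgebra (R × S) G ≃+* AddMonoidAlgebra R G × AddMonoidAlgebra S G := by
  refine RingEquiv.ofBijective
    ((mapRangeRingHom G (RingHom.fst R S)).prod (mapRangeRingHom G (RingHom.snd R S))) ?_
  have key : (((mapRangeRingHom G (RingHom.fst R S)).prod (mapRangeRingHom G (RingHom.snd R S))) :
      AddMonoidAlgebra (R × S) G → AddMonoidAlgebra R G × AddMonoidAlgebra S G)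
      = AddMonoidAlgebra.coeffEquiv.trans ((finsuppProd G).trans
          (Equiv.prodCongr AddMonoidAlgebra.coeffEquiv.symm AddMonoidAlgebra.coeffEquiv.symm)) := by
    funext f
    exact Prod.ext (AddMonoidAlgebra.ext (mapRangeRingHom_apply _ _ _))
      (AddMonoidAlgebra.ext (mapRangeRingHom_apply _ _ _))
  rw [key]
  exact Equiv.bijective _

/-- finsupp into a finite pi type -/
def finsuppPi {ι : Type} [Fintype ι] (T : ι → Type) [∀ i, CommRing (T i)] (G : Type)
    [AddCommMonoid G] : (G →₀ ∀ i, T i) ≃ ∀ i, (G →₀ T i) where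
  toFun f i := Finsupp.mapRange (fun v => v i) rfl f
  invFun u :=
    letI := Classical.decEq G
    Finsupp.onFinset (Finset.univ.biUnion fun i => (u i).support)
      (fun g i => u i g) (by
        intro g hg
        simp only [Finset.mem_biUnion, Finset.mem_univ, true_and, Finsupp.mem_support_iff]
        by_contra hc
        push_neg at hc
        exact hg (funext hc))
  left_inv f := Finsupp.ext fun a => by simp [Finsupp.mapRange_apply]
  right_inv u := by
    funext i
    exact Finsupp.ext fun a => by simp [Finsupp.mapRange_apply]

/-- add monoid algebra over a finite product of rings splits -/
def piRingEquiv {ι : Type} [Fintype ι] (T : ι → Type) [∀ i, CommRing (T i)]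
    (G : Type) [AddCommMonoid G] :
    AddMonoidAlgebra (∀ i, T i) G ≃+* ∀ i, AddMonoidAlgebra (T i) G := by
  refine RingEquiv.ofBijective (Pi.ringHom (fun i => mapRangeRingHom G (Pi.evalRingHom T i))) ?_
  have key : ((Pi.ringHom (fun i => mapRangeRingHom G (Pi.evalRingHom T i))) :
      AddMonoidAlgebra (∀ i, T i) G → ∀ i, AddMonoidAlgebra (T i) G) =
        AddMonoidAlgebra.coeffEquiv.trans ((finsuppPi T G).trans
          (Equiv.piCongrRight fun i => AddMonoidAlgebra.coeffEquiv.symm)) := by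
    funext f
    funext i
    show mapRangeRingHom G (Pi.evalRingHom T i) f = _
    exact AddMonoidAlgebra.ext (mapRangeRingHom_apply _ _ _)
  rw [key]
  exact Equiv.bijective _

/-- the group-curry monoid hom -/
def curryMonoidHom (G H : Type) [AddCommMonoid G] [AddCommMonoid H] :
    Multiplicative (G × H) →* AddMonoidAlgebra (AddMonoidAlgebra R G) H where
  toFun a := AddMonoidAlgebra.single (Multiplicative.toAdd a).2
      (AddMonoidAlgebra.single (Multiplicative.toAdd a).1 1)
  map_one' := rfl
  map_mul' a b := by
    rw [AddMonoidAlgebra.single_mul_single, AddMonoidAlgebra.single_mul_single, mul_one]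
    rfl

theorem curry_single {G H M : Type} [AddCommMonoid M] (a : G) (b : H) (m : M) :
    (Finsupp.single ((a, b) : G × H) m).curry = Finsupp.single a (Finsupp.single b m) := by
  ext x y
  rw [Finsupp.curry_apply]
  rcases eq_or_ne a x with rfl | hax
  · rcases eq_or_ne b y with rfl | hby
    · simp
    · simp [Finsupp.single_apply, hby, Prod.ext_iff]
  · simp [Finsupp.single_apply, hax, Prod.ext_iff]

/-- currying for add monoid algebras over a product group -/
def curryRingEquiv (G H : Type) [AddCommMonoid G] [AddCommMonoid H] :
    AddMonoidAlgebra R (G × H) ≃+* AddMonoidAlgebra (AddMonoidAlgebra R G) H := by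
  refine RingEquiv.ofBijective
    (AddMonoidAlgebra.liftNCRingHom
      ((AddMonoidAlgebra.singleZeroRingHom :
          AddMonoidAlgebra R G →+* AddMonoidAlgebra (AddMonoidAlgebra R G) H).comp
        (AddMonoidAlgebra.singleZeroRingHom : R →+* AddMonoidAlgebra R G))
      (curryMonoidHom G H) fun _ _ => Commute.all _ _) ?_
  set φ := AddMonoidAlgebra.liftNCRingHom
      ((AddMonoidAlgebra.singleZeroRingHom :
          AddMonoidAlgebra R G →+* AddMonoidAlgebra (AddMonoidAlgebra R G) H).comp
        (AddMonoidAlgebra.singleZeroRingHom : R →+* AddMonoidAlgebra R G))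
      (curryMonoidHom G H) (fun _ _ => Commute.all _ _) with hφ
  let E : AddMonoidAlgebra R (G × H) ≃+ AddMonoidAlgebra (AddMonoidAlgebra R G) H :=
    (AddMonoidAlgebra.mapDomainAddEquiv R (Equiv.prodComm G H)).trans
      AddMonoidAlgebra.curryAddEquiv
  have key : (φ : AddMonoidAlgebra R (G × H) → AddMonoidAlgebra (AddMonoidAlgebra R G) H)
      = E := by
    have h2 : φ.toAddMonoidHom =
        (E : AddMonoidAlgebra R (G × H) →+ AddMonoidAlgebra (AddMonoidAlgebra R G) H) := by
      apply AddMonoidAlgebra.addMonoidHom_ext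
      intro a b
      obtain ⟨g, h⟩ := a
      have lhs : φ (AddMonoidAlgebra.single (g, h) b)
          = AddMonoidAlgebra.single h (AddMonoidAlgebra.single g b) := by
        rw [hφ, liftNCRingHom_single]
        show AddMonoidAlgebra.single 0 (AddMonoidAlgebra.single 0 b) *
          AddMonoidAlgebra.single h (AddMonoidAlgebra.single g 1) = _
        rw [AddMonoidAlgebra.single_mul_single, AddMonoidAlgebra.single_mul_single, zero_add,
          zero_add, mul_one]
      have rhs : E (AddMonoidAlgebra.single ((g, h) : G × H) b)
          = AddMonoidAlgebra.single h (AddMonoidAlgebra.single g b) := by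
        simp [E]
      exact lhs.trans rhs.symm
    exact congrArg (DFunLike.coe) h2 ▸ rfl
  rw [key]
  exact E.bijective

/-- add monoid algebra over the trivial group -/
def uniqueRingEquiv (G : Type) [AddCommMonoid G] [Subsingleton G] :
    AddMonoidAlgebra R G ≃+* R := by
  have hs : ∀ f : AddMonoidAlgebra R G, AddMonoidAlgebra.single 0 (f.coeff 0) = f := fun f =>
    AddMonoidAlgebra.ext (Finsupp.ext fun a => by
      rw [Subsingleton.elim a 0]; exact Finsupp.single_eq_same)
  exact
  { toFun := fun f => f.coeff 0
    invFun := fun r => AddMonoidAlgebra.single 0 r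
    left_inv := hs
    right_inv := fun r => Finsupp.single_eq_same
    map_add' := fun f g => rfl
    map_mul' := fun f g => by
      conv_lhs => rw [← hs f, ← hs g]
      rw [AddMonoidAlgebra.single_mul_single]
      show (AddMonoidAlgebra.single (0 + 0) (f.coeff 0 * g.coeff 0)).coeff 0 = _
      rw [zero_add]
      exact Finsupp.single_eq_same }

/-- structural: product with a trivial (unique) ring factor -/
def prodUniqueRingEquiv (A B : Type) [Ring A] [Ring B] [Subsingleton B] [Unique B] :
    A × B ≃+* A where
  toFun x := x.1
  invFun a := (a, default)
  left_inv x := Prod.ext rfl (Subsingleton.elim _ _)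
  right_inv a := rfl
  map_mul' _ _ := rfl
  map_add' _ _ := rfl

/-- structural: associativity of products of rings -/
def prodAssocRingEquiv (A B C : Type) [Ring A] [Ring B] [Ring C] :
    (A × B) × C ≃+* A × (B × C) where
  toEquiv := Equiv.prodAssoc A B C
  map_mul' _ _ := rfl
  map_add' _ _ := rfl

/-- structural: uncurrying of pi types of rings -/
def piCurryRingEquiv (ι κ A : Type) [Ring A] :
    (ι → κ → A) ≃+* (ι × κ → A) where
  toEquiv := (Equiv.curry ι κ A).symm
  map_mul' _ _ := rfl
  map_add' _ _ := rfl

/-- structural: reindexing a power of a ring -/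
def piReindexRingEquiv {ι κ : Type} (e : ι ≃ κ) (A : Type) [Ring A] :
    (ι → A) ≃+* (κ → A) where
  toFun f := f ∘ e.symm
  invFun f := f ∘ e
  left_inv f := by funext i; simp
  right_inv f := by funext i; simp
  map_mul' _ _ := rfl
  map_add' _ _ := rfl

/-- structural: peeling one factor off a finite power -/
def piSuccRingEquiv (s : ℕ) (A : Type) [Ring A] :
    (A × (Fin s → A)) ≃+* (Fin (s + 1) → A) where
  toEquiv := Fin.consEquiv (fun _ : Fin (s + 1) => A)
  map_mul' x y := by
    funext i
    show (Fin.consEquiv (fun _ : Fin (s + 1) => A)) _ i = _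
    simp only [Fin.consEquiv, Equiv.coe_fn_mk]
    refine Fin.cases ?_ (fun j => ?_) i <;> simp [Fin.cons]
  map_add' x y := by
    funext i
    show (Fin.consEquiv (fun _ : Fin (s + 1) => A)) _ i = _
    simp only [Fin.consEquiv, Equiv.coe_fn_mk]
    refine Fin.cases ?_ (fun j => ?_) i <;> simp [Fin.cons]

open Polynomial in
/-- the group algebra of `ZMod k` is `R[X]/(X^k - 1)` -/
def zmodAlgEquivAdjoinRoot (k : ℕ) (hk : 1 < k) :
    AddMonoidAlgebra R (ZMod k) ≃ₐ[R] AdjoinRoot (X ^ k - 1 : R[X]) := by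
  haveI : NeZero k := ⟨by omega⟩
  have hroot : (AdjoinRoot.root (X ^ k - 1 : R[X])) ^ k = 1 := by
    have h : (AdjoinRoot.mk (X ^ k - 1 : R[X])) (X ^ k - 1) = 0 := AdjoinRoot.mk_self
    rw [map_sub, map_pow, map_one, AdjoinRoot.mk_X, sub_eq_zero] at h
    exact h
  have hval : ∀ a b : ZMod k, (AdjoinRoot.root (X ^ k - 1 : R[X])) ^ (a + b).val
      = (AdjoinRoot.root (X ^ k - 1 : R[X])) ^ a.val
        * (AdjoinRoot.root (X ^ k - 1 : R[X])) ^ b.val := by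
    intro a b
    rw [ZMod.val_add, ← pow_eq_pow_mod _ hroot, pow_add]
  let χ : Multiplicative (ZMod k) →* AdjoinRoot (X ^ k - 1 : R[X]) :=
    { toFun := fun a => (AdjoinRoot.root (X ^ k - 1 : R[X])) ^ (Multiplicative.toAdd a).val
      map_one' := by simp
      map_mul' := fun a b => hval _ _ }
  have hb : (aeval (AddMonoidAlgebra.single (1 : ZMod k) (1 : R))) ((X : R[X]) ^ k - 1) = 0 := by
    rw [map_sub, map_pow, aeval_X, map_one, AddMonoidAlgebra.single_pow, one_pow]
    have h1 : k • (1 : ZMod k) = 0 := by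
      rw [nsmul_eq_mul, mul_one, ZMod.natCast_self]
    rw [h1, sub_eq_zero]
    rfl
  refine AlgEquiv.ofAlgHom (AddMonoidAlgebra.lift R _ (ZMod k) χ)
    (AdjoinRoot.liftAlgHom _ (Algebra.ofId R _) (AddMonoidAlgebra.single (1 : ZMod k) (1 : R))
      (by rw [Algebra.toRingHom_ofId, ← aeval_def]; exact hb)) ?_ ?_
  · apply AdjoinRoot.algHom_ext
    rw [AlgHom.comp_apply, AdjoinRoot.liftAlgHom_root, AlgHom.id_apply]
    rw [AddMonoidAlgebra.lift_single]
    show (1 : R) • (AdjoinRoot.root (X ^ k - 1 : R[X])) ^ (1 : ZMod k).val = _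
    rw [ZMod.val_one_eq_one_mod, Nat.mod_eq_of_lt hk, pow_one, one_smul]
  · apply AddMonoidAlgebra.algHom_ext
    intro a
    rw [AlgHom.comp_apply, AlgHom.id_apply, AddMonoidAlgebra.lift_single]
    show (AdjoinRoot.liftAlgHom _ _ _ _) ((1 : R) • (AdjoinRoot.root (X ^ k - 1 : R[X])) ^ a.val) = _
    rw [one_smul, map_pow, AdjoinRoot.liftAlgHom_root, AddMonoidAlgebra.single_pow, one_pow]
    congr 1
    rw [nsmul_eq_mul, mul_one]
    exact ZMod.natCast_rightInverse a
    exact Subsingleton.elim _ _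

open Polynomial in
/-- decomposition of `ℚ[ZMod p]` -/
def ratZModRingEquiv (p : ℕ) (hp : p.Prime) :
    AddMonoidAlgebra ℚ (ZMod p) ≃+* ℚ × CyclotomicField p ℚ := by
  haveI : Fact p.Prime := ⟨hp⟩
  haveI : NeZero p := ⟨hp.ne_zero⟩
  haveI : NeZero ((p : ℕ) : ℚ) :=
    ⟨Nat.cast_ne_zero.mpr hp.ne_zero⟩
  set K := CyclotomicField p ℚ with hK
  haveI : IsCyclotomicExtension {p} ℚ K :=
    CyclotomicField.isCyclotomicExtension p ℚ
  have hcycl : Irreducible (cyclotomic p ℚ) := cyclotomic.irreducible_rat hp.pos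
  -- the ideal splitting
  have hmul : ((X : ℚ[X]) - C 1) * cyclotomic p ℚ = X ^ p - 1 := by
    rw [mul_comm, C_1]
    exact cyclotomic_prime_mul_X_sub_one ℚ p
  have hspan : Ideal.span {(X : ℚ[X]) ^ p - 1}
      = Ideal.span {(X : ℚ[X]) - C 1} * Ideal.span {cyclotomic p ℚ} := by
    rw [Ideal.span_singleton_mul_span_singleton, hmul]
  have hco : IsCoprime ((X : ℚ[X]) - C 1) (cyclotomic p ℚ) := by
    rw [(Polynomial.irreducible_X_sub_C (1 : ℚ)).coprime_iff_not_dvd]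
    intro hdvd
    have h1 : IsRoot (cyclotomic p ℚ) 1 := dvd_iff_isRoot.mp hdvd
    have h2 : eval 1 (cyclotomic p ℚ) = p := eval_one_cyclotomic_prime
    rw [IsRoot.def, h2] at h1
    exact_mod_cast hp.ne_zero (by exact_mod_cast h1)
  -- the cyclotomic field piece
  have hζ := IsCyclotomicExtension.zeta_spec p ℚ K
  have hζroot : (aeval (IsCyclotomicExtension.zeta p ℚ K)) (cyclotomic p ℚ) = 0 := by
    rw [aeval_def, ← eval_map, map_cyclotomic]
    exact (hζ.isRoot_cyclotomic hp.pos).eq_zero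
  haveI : Fact (Irreducible (cyclotomic p ℚ)) := ⟨hcycl⟩
  haveI : FiniteDimensional ℚ K := IsCyclotomicExtension.finiteDimensional {p} ℚ K
  have hFD : FiniteDimensional ℚ (AdjoinRoot (cyclotomic p ℚ)) :=
    Module.Finite.of_basis (AdjoinRoot.powerBasis hcycl.ne_zero).basis
  have hfr : Module.finrank ℚ (AdjoinRoot (cyclotomic p ℚ)) = Module.finrank ℚ K := by
    rw [(AdjoinRoot.powerBasis hcycl.ne_zero).finrank, AdjoinRoot.powerBasis_dim,
      natDegree_cyclotomic, IsCyclotomicExtension.finrank (n := p) K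
        (cyclotomic.irreducible_rat (by exact hp.pos))]
  let ν : AdjoinRoot (cyclotomic p ℚ) →ₐ[ℚ] K :=
    AdjoinRoot.liftAlgHom _ (Algebra.ofId ℚ K) (IsCyclotomicExtension.zeta p ℚ K)
      (by rw [Algebra.toRingHom_ofId, ← aeval_def]; exact hζroot)
  have hinj : Function.Injective ν := ν.toRingHom.injective
  have hbij : Function.Bijective ν := by
    refine ⟨hinj, ?_⟩
    have h := (LinearMap.injective_iff_surjective_of_finrank_eq_finrank
      (f := ν.toLinearMap) hfr).mp hinj
    exact h
  have cycEquiv : (ℚ[X] ⧸ Ideal.span {cyclotomic p ℚ}) ≃+* K :=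
    RingEquiv.ofBijective ν.toRingHom hbij
  -- assemble
  refine ((zmodAlgEquivAdjoinRoot p hp.one_lt).toRingEquiv.trans ?_)
  refine RingEquiv.trans (Ideal.quotEquivOfEq hspan) ?_
  refine RingEquiv.trans (Ideal.quotientMulEquivQuotientProd _ _
    ((Ideal.isCoprime_span_singleton_iff _ _).mpr hco)) ?_
  exact RingEquiv.prodCongr (quotientSpanXSubCAlgEquiv (1 : ℚ)).toRingEquiv cycEquiv

open Polynomial in
/-- decomposition of `K[ZMod p]` for `K` the `p`-th cyclotomic field -/
def cycZModRingEquiv (p : ℕ) (hp : p.Prime) :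
    AddMonoidAlgebra (CyclotomicField p ℚ) (ZMod p)
      ≃+* (Fin p → CyclotomicField p ℚ) := by
  haveI : Fact p.Prime := ⟨hp⟩
  haveI : NeZero p := ⟨hp.ne_zero⟩
  haveI : NeZero ((p : ℕ) : ℚ) := ⟨Nat.cast_ne_zero.mpr hp.ne_zero⟩
  set K := CyclotomicField p ℚ with hK
  haveI : IsCyclotomicExtension {p} ℚ K :=
    CyclotomicField.isCyclotomicExtension p ℚ
  have hζ : IsPrimitiveRoot (IsCyclotomicExtension.zeta p ℚ K) p :=
    IsCyclotomicExtension.zeta_spec p ℚ K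
  set s := nthRootsFinset p (1 : K) with hs
  have hprod : (X : K[X]) ^ p - 1 = ∏ μ ∈ s, (X - C μ) := X_pow_sub_one_eq_prod hp.pos hζ
  have hpair : ∀ i j : {x // x ∈ s}, i ≠ j → IsCoprime ((X : K[X]) - C i.val)
      ((X : K[X]) - C j.val) := by
    intro i j hij
    exact Polynomial.pairwise_coprime_X_sub_C Subtype.coe_injective hij
  have hspan : Ideal.span {(X : K[X]) ^ p - 1}
      = ⨅ μ : {x // x ∈ s}, Ideal.span {(X : K[X]) - C μ.val} := by
    rw [Ideal.iInf_span_singleton hpair, Finset.prod_coe_sort s (fun μ => (X : K[X]) - C μ),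
      ← hprod]
  refine ((zmodAlgEquivAdjoinRoot p hp.one_lt).toRingEquiv.trans ?_)
  refine RingEquiv.trans (Ideal.quotEquivOfEq hspan) ?_
  refine RingEquiv.trans (Ideal.quotientInfRingEquivPiQuotient _
    (fun i j hij => (Ideal.isCoprime_span_singleton_iff _ _).mpr (hpair i j hij))) ?_
  refine RingEquiv.trans (RingEquiv.piCongrRight
    (fun μ => (quotientSpanXSubCAlgEquiv (μ.val : K)).toRingEquiv)) ?_
  exact piReindexRingEquiv (Fintype.equivFinOfCardEq (by
    rw [Fintype.card_coe]
    exact hζ.card_nthRootsFinset)) K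

/-- main induction: decomposition of `ℚ[(ZMod p)^n]` -/
theorem main (p : ℕ) (hp : p.Prime) (n : ℕ) :
    Nonempty (AddMonoidAlgebra ℚ (Fin n → ZMod p) ≃+*
      (ℚ × (Fin (∑ i ∈ Finset.range n, p ^ i) → CyclotomicField p ℚ))) := by
  set K := CyclotomicField p ℚ with hK
  induction n with
  | zero =>
      refine ⟨(uniqueRingEquiv _).trans ?_⟩
      refine RingEquiv.trans ((prodUniqueRingEquiv ℚ (Fin 0 → K)).symm) ?_
      exact RingEquiv.prodCongr (RingEquiv.refl ℚ)
        (piReindexRingEquiv (finCongr (by simp)) K)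
  | succ n ih =>
      obtain ⟨e⟩ := ih
      set m := ∑ i ∈ Finset.range n, p ^ i with hm
      have hcount : ∑ i ∈ Finset.range (n + 1), p ^ i = m * p + 1 := by
        rw [Finset.sum_range_succ', pow_zero, hm]
        congr 1
        rw [Finset.sum_mul]
        exact Finset.sum_congr rfl fun i _ => pow_succ p i
      let ae : (Fin (n + 1) → ZMod p) ≃+ ((Fin n → ZMod p) × ZMod p) :=
        { toFun := fun f => (fun i => f i.succ, f 0)
          invFun := fun x => Fin.cons x.2 x.1
          left_inv := fun f => by
            funext i
            refine Fin.cases ?_ (fun j => ?_) i <;> simp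
          right_inv := fun x => by simp
          map_add' := fun f g => rfl }
      refine ⟨(AddMonoidAlgebra.domCongr ℚ ℚ ae).toRingEquiv.trans ?_⟩
      refine (curryRingEquiv (Fin n → ZMod p) (ZMod p)).trans ?_
      refine (mapRangeRingEquiv (ZMod p) e).trans ?_
      refine (prodRingEquiv (ZMod p)).trans ?_
      refine (RingEquiv.prodCongr (ratZModRingEquiv p hp)
        ((piRingEquiv (fun _ : Fin m => K) (ZMod p)).trans
          (RingEquiv.piCongrRight (fun _ => cycZModRingEquiv p hp)))).trans ?_
      refine (prodAssocRingEquiv ℚ K _).trans ?_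
      refine RingEquiv.prodCongr (RingEquiv.refl ℚ) ?_
      refine RingEquiv.trans (RingEquiv.prodCongr (RingEquiv.refl K)
        ((piCurryRingEquiv (Fin m) (Fin p) K).trans
          (piReindexRingEquiv finProdFinEquiv K))) ?_
      refine (piSuccRingEquiv (m * p) K).trans ?_
      exact piReindexRingEquiv (finCongr hcount.symm) K

end

end PW


/-- Perlis–Walker for an elementary abelian `p`-group: if `H ≅ F_q` (as an additive group,
`q = p^n`), then the rational group algebra `ℚ[H]` is isomorphic to
`ℚ ⊕ (⊕_{a ∈ S} ℚ(ζ_p))` where `S` has `(q−1)/(p−1)` elements (coset representatives of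
`F_p^*` in `F_q^*`); in particular `dim_ℚ ℚ[H] = q` and the number of `ℚ`-simple factors
is `1 + (q−1)/(p−1)`. -/
theorem stmt14 (p n : ℕ) (hp : p.Prime) (hn : 0 < n) (q : ℕ) (hq : q = p ^ n)
    (F : Type) [Field F] [Fintype F] (hF : Fintype.card F = q) :
    Nonempty (AddMonoidAlgebra ℚ F ≃ₐ[ℚ]
      (ℚ × (Fin ((q - 1) / (p - 1)) → CyclotomicField p ℚ))) ∧
    Module.finrank ℚ (AddMonoidAlgebra ℚ F) = q := by
  classical
  set K := CyclotomicField p ℚ with hK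
  haveI : Fact p.Prime := ⟨hp⟩
  haveI : NeZero p := ⟨hp.ne_zero⟩
  -- identify the characteristic
  haveI : CharP F (ringChar F) := ringChar.charP F
  obtain ⟨k, hc_prime, hcard⟩ := FiniteField.card F (ringChar F)
  have hpr : p = ringChar F := by
    have h1 : p ∣ ringChar F ^ (k : ℕ) := by
      rw [← hcard, hF, hq]
      exact dvd_pow_self p hn.ne'
    exact (Nat.prime_dvd_prime_iff_eq hp hc_prime).mp (hp.dvd_of_dvd_pow h1)
  haveI : CharP F p := by rw [hpr]; exact ringChar.charP F
  letI : Algebra (ZMod p) F := ZMod.algebra F p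
  -- `F` is an `n`-dimensional `ZMod p` vector space
  have hdim : Module.finrank (ZMod p) F = n := by
    have hc : Fintype.card F = Fintype.card (ZMod p) ^ Module.finrank (ZMod p) F :=
      Module.card_eq_pow_finrank
    rw [ZMod.card, hF, hq] at hc
    exact (Nat.pow_right_injective hp.two_le hc.symm)
  let b := Module.finBasis (ZMod p) F
  let lin : F ≃ₗ[ZMod p] (Fin n → ZMod p) := (b.reindex (finCongr hdim)).equivFun
  -- geometric series
  set m := ∑ i ∈ Finset.range n, p ^ i with hm
  have hgeoZ : ((p : ℤ) - 1) * (m : ℤ) = (p : ℤ) ^ n - 1 := by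
    rw [hm, mul_comm]
    push_cast
    exact geom_sum_mul (p : ℤ) n
  have h1q : 1 ≤ q := by rw [hq]; exact Nat.one_le_pow n p hp.pos
  have hgeo : (p - 1) * m = q - 1 := by
    have hq' : ((q : ℤ)) = (p : ℤ) ^ n := by rw [hq]; push_cast; ring
    zify [hp.one_le, h1q]
    rw [hgeoZ, hq']
  have hdiv : (q - 1) / (p - 1) = m := by
    rw [← hgeo, Nat.mul_div_cancel_left _ (by have := hp.two_le; omega)]
  -- assemble the ring equivalence
  obtain ⟨e⟩ := PW.main p hp n
  let E : AddMonoidAlgebra ℚ F ≃+* (ℚ × (Fin ((q - 1) / (p - 1)) → K)) :=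
    ((AddMonoidAlgebra.domCongr ℚ ℚ lin.toAddEquiv).toRingEquiv.trans e).trans
      (RingEquiv.prodCongr (RingEquiv.refl ℚ)
        (PW.piReindexRingEquiv (finCongr (hm ▸ hdiv.symm)) K))
  let A : AddMonoidAlgebra ℚ F ≃ₐ[ℚ] (ℚ × (Fin ((q - 1) / (p - 1)) → K)) :=
    AlgEquiv.ofRingEquiv (f := E) (fun x => E.toRingHom.map_rat_algebraMap x)
  refine ⟨⟨A⟩, ?_⟩
  -- the dimension count
  haveI : NeZero ((p : ℕ) : ℚ) := ⟨Nat.cast_ne_zero.mpr hp.ne_zero⟩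
  haveI : IsCyclotomicExtension {p} ℚ K :=
    CyclotomicField.isCyclotomicExtension p ℚ
  haveI : FiniteDimensional ℚ K := IsCyclotomicExtension.finiteDimensional {p} ℚ K
  have hKrank : Module.finrank ℚ K = p - 1 := by
    rw [IsCyclotomicExtension.finrank (n := p) K
      (Polynomial.cyclotomic.irreducible_rat (by exact hp.pos))]
    exact Nat.totient_prime hp
  have hfr := A.toLinearEquiv.finrank_eq
  rw [hfr, Module.finrank_prod, Module.finrank_self, Module.finrank_pi_fintype,
    Finset.sum_const, Finset.card_univ, Fintype.card_fin, smul_eq_mul, hKrank, hdiv]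
  have h2 : m * (p - 1) = q - 1 := by rw [mul_comm]; exact hgeo
  omega
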